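/- The only solutions to the equation 2^y * (2^x + 1)^z - 1 = (2^(x+1) + 1)^w in integers x ≥ 3, y ≥ 1, z ≥ 0, w ≥ 0 are (y, z, w) = (1, 0, 0) and (y, z, w) = (1, 1, 1). -/

import Mathlib

lemma lte_step {p A z w : ℕ} (hp : p.Prime) (hodd : ¬ 2 ∣ (A+1)) (hpA : p ∣ A+1)
    (hz : 0 < z) (hw : 0 < w) (hwo : Odd w)
    (E : 2 * (A+1)^z = (2*A+1)^w + 1) :
    padicValNat p w = (z - 1) * padicValNat p (A+1) := by
  haveI : Fact p.Prime := ⟨hp⟩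
  have hp2 : p ≠ 2 := by rintro rfl; exact hodd hpA
  have hpo : Odd p := hp.odd_of_ne_two hp2
  have hpx : ¬ p ∣ (2*A+1) := by
    intro hd
    have h1 : p ∣ 2*(A+1) := Dvd.dvd.mul_left hpA 2
    have : p ∣ 1 := by
      have := Nat.dvd_sub h1 hd
      simpa [Nat.mul_add] using this
    exact Nat.Prime.one_lt hp |>.ne' (Nat.dvd_one.mp this)
  have hxy : p ∣ (2*A+1) + 1 := by
    have : (2*A+1) + 1 = 2*(A+1) := by ring
    rw [this]; exact Dvd.dvd.mul_left hpA 2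
  have key := Nat.emultiplicity_pow_add_pow hp hpo hxy hpx hwo
  rw [one_pow] at key
  have h1pos : 0 < (2*A+1)^w + 1 := by positivity
  have h2pos : 0 < (2*A+1) + 1 := by positivity
  rw [← padicValNat_eq_emultiplicity h1pos.ne', ← padicValNat_eq_emultiplicity h2pos.ne',
      ← padicValNat_eq_emultiplicity hw.ne', ← Nat.cast_add, Nat.cast_inj] at key
  have hA1 : A + 1 ≠ 0 := by positivity
  have hpd2 : ¬ p ∣ 2 := fun hd => hp2 ((Nat.prime_dvd_prime_iff_eq hp Nat.prime_two).mp hd)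
  have e1 : padicValNat p ((2*A+1)^w + 1) = z * padicValNat p (A+1) := by
    rw [← E, padicValNat.mul (by norm_num) (by positivity), padicValNat.pow (A+1) z,
      padicValNat.eq_zero_of_not_dvd hpd2, zero_add]
  have e2 : padicValNat p ((2*A+1) + 1) = padicValNat p (A+1) := by
    have : (2*A+1) + 1 = 2*(A+1) := by ring
    rw [this, padicValNat.mul (by norm_num) hA1,
      padicValNat.eq_zero_of_not_dvd hpd2, zero_add]
  rw [e1, e2] at key
  obtain ⟨s, rfl⟩ : ∃ s, z = s + 1 := ⟨z - 1, by omega⟩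
  rw [add_mul, one_mul] at key
  have hm : padicValNat p w = s * padicValNat p (A+1) := by linarith
  simpa using hm

lemma key_dvd {A z w : ℕ} (hodd : ¬ 2 ∣ (A+1)) (hz : 0 < z) (hw : 0 < w) (hwo : Odd w)
    (E : 2 * (A+1)^z = (2*A+1)^w + 1) : (A+1)^(z-1) ∣ w := by
  have h1 : (A+1)^(z-1) ≠ 0 := by positivity
  refine (Nat.factorization_le_iff_dvd h1 hw.ne' ).mp ?_
  rw [Nat.factorization_pow, Finsupp.le_def]
  intro p
  rcases Nat.eq_zero_or_pos ((A+1).factorization p) with h0 | hpos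
  · simp [h0]
  · have hp : p.Prime := Nat.prime_of_mem_primeFactors (by
      rw [← Nat.support_factorization]; exact Finsupp.mem_support_iff.mpr hpos.ne')
    have hpA : p ∣ A + 1 := Nat.dvd_of_factorization_pos hpos.ne'
    have hval := lte_step hp hodd hpA hz hw hwo E
    simp only [Finsupp.smul_apply, smul_eq_mul, Nat.factorization_def _ hp]
    exact hval.ge

theorem stmt1 (x y z w : ℕ) (hx : 3 ≤ x) (hy : 1 ≤ y)
    (h : 2 ^ y * (2 ^ x + 1) ^ z - 1 = (2 ^ (x + 1) + 1) ^ w) :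
    (y = 1 ∧ z = 0 ∧ w = 0) ∨ (y = 1 ∧ z = 1 ∧ w = 1) := by
  obtain ⟨t, rfl⟩ : ∃ t, x = t + 3 := ⟨x - 3, by omega⟩
  have hB1 : 1 ≤ 2 ^ t := Nat.one_le_two_pow
  set B : ℕ := 2 ^ t with hB
  set A : ℕ := 8 * B with hAdef
  have hA : 2 ^ (t + 3) = A := by rw [hAdef, hB, pow_add]; ring
  have hA1 : 2 ^ (t + 3 + 1) = 2 * A := by rw [pow_succ, hA]; ring
  rw [hA, hA1] at h
  have hpos : 0 < 2 ^ y * (A + 1) ^ z := by positivity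
  have E0 : 2 ^ y * (A + 1) ^ z = (2 * A + 1) ^ w + 1 := by omega
  have hmod : (2 * A + 1) ^ w % 4 = 1 := by
    have h1 : (2 * A + 1) % 4 = 1 % 4 := by omega
    have h2 := Nat.ModEq.pow w h1
    simpa [Nat.ModEq, Nat.one_mod] using h2
  -- step 1 : y = 1
  have hy1 : y = 1 := by
    by_contra hne
    obtain ⟨u, rfl⟩ : ∃ u, y = u + 2 := ⟨y - 2, by omega⟩
    have E2 : 4 * (2 ^ u * (A + 1) ^ z) = (2 * A + 1) ^ w + 1 := by
      rw [← E0, pow_add]; ring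
    omega
  subst hy1
  rw [pow_one] at E0
  rcases Nat.eq_zero_or_pos z with rfl | hz
  · left
    refine ⟨rfl, rfl, ?_⟩
    rw [pow_zero, mul_one] at E0
    by_contra hw0
    have : 1 < (2 * A + 1) ^ w := Nat.one_lt_pow hw0 (by omega)
    omega
  · right
    have hodd : ¬ 2 ∣ (A + 1) := by omega
    have hwodd : Odd w := by
      rcases Nat.even_or_odd w with hev | hod
      · exfalso
        obtain ⟨k, rfl⟩ := hev
        have h1 : (2*A+1)^2 % (A+1) = 1 % (A+1) := by
          have e : (2*A+1)^2 = (A+1)*(4*A) + 1 := by ring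
          rw [e, Nat.mul_add_mod]
        have h2 := Nat.ModEq.pow k h1
        rw [← pow_mul, one_pow] at h2
        have h3 : (2*A+1)^(k+k) ≡ 1 [MOD (A+1)] := by
          rw [show k + k = 2*k by ring]; exact h2
        have hRpos : 1 ≤ (2*A+1)^(k+k) := Nat.one_le_pow _ _ (by omega)
        have d1 : (A+1) ∣ (2*A+1)^(k+k) - 1 := (Nat.modEq_iff_dvd' hRpos).mp h3.symm
        have d2 : (A+1) ∣ (2*A+1)^(k+k) + 1 := by
          rw [← E0]; exact Dvd.dvd.mul_left (dvd_pow_self _ (by omega : z ≠ 0)) 2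
        have d3 : (A+1) ∣ 2 := by
          have := Nat.dvd_sub d2 d1
          have e2 : (2*A+1)^(k+k) + 1 - ((2*A+1)^(k+k) - 1) = 2 := by omega
          rwa [e2] at this
        have := Nat.le_of_dvd (by norm_num) d3
        omega
      · exact hod
    have hw1 : 1 ≤ w := hwodd.pos
    rcases Nat.lt_or_ge z 2 with hz1 | hz2
    · have hz1' : z = 1 := by omega
      subst hz1'
      rw [pow_one] at E0
      have hEq : (2*A+1)^w = (2*A+1)^1 := by rw [pow_one]; omega
      exact ⟨rfl, rfl, Nat.pow_right_injective (by omega) hEq⟩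
    · exfalso
      have hdvd : (A + 1) ^ (z - 1) ∣ w := key_dvd hodd hz (by omega) hwodd E0
      have hwge : (A + 1) ^ (z - 1) ≤ w := Nat.le_of_dvd (by omega) hdvd
      have hwz : w ≤ z := by
        by_contra hlt
        push_neg at hlt
        have hcalc : (A+1)^z * 16 ≤ (2*A+1)^w := by
          calc (A+1)^z * 16 ≤ (A+1)^z * (2*A) := by
                have : 16 ≤ 2*A := by omega
                exact Nat.mul_le_mul_left _ this
            _ ≤ (2*A)^z * (2*A) := by
                have : (A+1)^z ≤ (2*A)^z := Nat.pow_le_pow_left (by omega) z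
                exact Nat.mul_le_mul_right _ this
            _ = (2*A)^(z+1) := by rw [pow_succ]
            _ ≤ (2*A)^w := Nat.pow_le_pow_right (by omega) (by omega)
            _ ≤ (2*A+1)^w := Nat.pow_le_pow_left (by omega) w
        have hP : 1 ≤ (A+1)^z := Nat.one_le_pow _ _ (by omega)
        omega
      have hzlt : z < (A + 1) ^ (z - 1) := by
        calc z < 2 ^ z := Nat.lt_two_pow_self
          _ ≤ 4 ^ (z - 1) := by
              rw [show (4:ℕ) = 2 ^ 2 by norm_num, ← pow_mul]
              exact Nat.pow_le_pow_right (by norm_num) (by omega)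
          _ ≤ (A + 1) ^ (z - 1) := Nat.pow_le_pow_left (by omega) _
      omega
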